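/- For every t > 0, the kernel g satisfies g(t) ≤ (4 Γ(γ) √π / (π² c_μ)) · (√π · t^{γ-1} + Γ(γ) · t^{-γ}); in particular g(t) ≤ c · max{t^{γ-1}, t^{-γ}} for a constant c depending only on μ. -/

import Mathlib

open MeasureTheory Real Set

set_option maxHeartbeats 1000000

private lemma aux_sin_lb {γ α : ℝ} (hγ0 : 0 < γ) (hγ2 : γ < 1/2)
    (hα1 : γ ≤ α) (hα2 : α ≤ 1 - γ) : Real.sin (π * γ) ≤ Real.sin (π * α) := by
  have hπ := Real.pi_pos
  rcases le_total α (1/2) with h | h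
  · apply Real.strictMonoOn_sin.monotoneOn ⟨by nlinarith, by nlinarith⟩
      ⟨by nlinarith, by nlinarith⟩ (by nlinarith)
  · have hrw : Real.sin (π * α) = Real.sin (π * (1 - α)) := by
      rw [show π * (1 - α) = π - π * α by ring, Real.sin_pi_sub]
    rw [hrw]
    apply Real.strictMonoOn_sin.monotoneOn ⟨by nlinarith, by nlinarith⟩
      ⟨by nlinarith, by nlinarith⟩ (by nlinarith)

private lemma aux_gamma_le {x : ℝ} (h1 : 1/2 ≤ x) (h2 : x ≤ 1) :
    Real.Gamma x ≤ Real.sqrt π := by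
  have hseg : x ∈ segment ℝ (1/2 : ℝ) 1 := by
    rw [segment_eq_Icc (by norm_num : (1/2:ℝ) ≤ 1)]; exact ⟨h1, h2⟩
  have h := Real.convexOn_Gamma.le_on_segment (mem_Ioi.mpr (by norm_num))
    (mem_Ioi.mpr (by norm_num)) hseg
  rw [Real.Gamma_one_half_eq, Real.Gamma_one] at h
  have h1π : (1:ℝ) ≤ Real.sqrt π := by
    rw [show (1:ℝ) = Real.sqrt 1 by simp]
    exact Real.sqrt_le_sqrt (by linarith [Real.pi_gt_three])
  exact h.trans_eq (max_eq_left h1π)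

private lemma aux_int (μ : ℝ → ℝ) (hμ_int : IntegrableOn μ (Ioo 0 1))
    (hμ_nonneg : ∀ α ∈ Ioo (0:ℝ) 1, 0 ≤ μ α) {r : ℝ} (hr : 0 < r) :
    IntegrableOn (fun α => Real.sin (π * α) * r ^ α * μ α) (Ioo 0 1) := by
  have hcont : Continuous fun α : ℝ => Real.sin (π * α) * r ^ α :=
    (Real.continuous_sin.comp (continuous_const.mul continuous_id)).mul
      (continuous_iff_continuousAt.mpr fun x => Real.continuousAt_const_rpow hr.ne')
  apply Integrable.mono' (hμ_int.const_mul (max 1 r))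
    (hcont.aestronglyMeasurable.mul hμ_int.1)
  rw [ae_restrict_iff' measurableSet_Ioo]
  refine ae_of_all _ fun α hα => ?_
  have hμα := hμ_nonneg α hα
  have habs : |Real.sin (π * α)| ≤ 1 := abs_le.mpr ⟨Real.neg_one_le_sin _, Real.sin_le_one _⟩
  have h0 : 0 ≤ r ^ α := (Real.rpow_pos_of_pos hr α).le
  have hrα : r ^ α ≤ max 1 r := by
    rcases le_total r 1 with h | h
    · exact le_max_of_le_left (Real.rpow_le_one hr.le h hα.1.le)
    · calc r ^ α ≤ r ^ (1:ℝ) := Real.rpow_le_rpow_of_exponent_le h hα.2.le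
        _ = r := Real.rpow_one r
        _ ≤ max 1 r := le_max_right _ _
  simp only [Pi.mul_apply]
  rw [norm_mul, norm_mul, Real.norm_eq_abs, Real.norm_eq_abs, Real.norm_eq_abs,
    abs_of_nonneg h0, abs_of_nonneg hμα]
  have key : |Real.sin (π * α)| * r ^ α ≤ max 1 r := by nlinarith [abs_nonneg (Real.sin (π * α))]
  exact mul_le_mul_of_nonneg_right key hμα

private lemma aux_S_lb (μ : ℝ → ℝ) (hμ_int : IntegrableOn μ (Ioo 0 1))
    (hμ_nonneg : ∀ α ∈ Ioo (0:ℝ) 1, 0 ≤ μ α)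
    {γ : ℝ} (hγ0 : 0 < γ) (hγ2 : γ < 1/2) {r : ℝ} (hr : 0 < r) :
    Real.sin (π * γ) * min (r ^ γ) (r ^ (1 - γ)) * ∫ α in Ioo γ (1 - γ), μ α
      ≤ ∫ α in Ioo (0:ℝ) 1, Real.sin (π * α) * r ^ α * μ α := by
  have hπ := Real.pi_pos
  have hsub : Ioo γ (1 - γ) ⊆ Ioo 0 1 := Ioo_subset_Ioo hγ0.le (by linarith)
  have hint1 := aux_int μ hμ_int hμ_nonneg hr
  have hint2 : IntegrableOn (fun α => Real.sin (π * α) * r ^ α * μ α) (Ioo γ (1 - γ)) :=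
    hint1.mono_set hsub
  have hint3 : IntegrableOn (fun α => Real.sin (π * γ) * min (r ^ γ) (r ^ (1 - γ)) * μ α)
      (Ioo γ (1 - γ)) := (hμ_int.mono_set hsub).const_mul _
  calc Real.sin (π * γ) * min (r ^ γ) (r ^ (1 - γ)) * ∫ α in Ioo γ (1 - γ), μ α
      = ∫ α in Ioo γ (1 - γ), Real.sin (π * γ) * min (r ^ γ) (r ^ (1 - γ)) * μ α := by
        rw [integral_const_mul]
    _ ≤ ∫ α in Ioo γ (1 - γ), Real.sin (π * α) * r ^ α * μ α := by
        apply setIntegral_mono_on hint3 hint2 measurableSet_Ioo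
        intro α hα
        have hμα : 0 ≤ μ α := hμ_nonneg α (hsub hα)
        have hsin : Real.sin (π * γ) ≤ Real.sin (π * α) := aux_sin_lb hγ0 hγ2 hα.1.le hα.2.le
        have hsin0 : 0 ≤ Real.sin (π * γ) :=
          Real.sin_nonneg_of_nonneg_of_le_pi (by positivity) (by nlinarith)
        have hm : min (r ^ γ) (r ^ (1 - γ)) ≤ r ^ α := by
          rcases le_total 1 r with h | h
          · exact le_trans (min_le_left _ _) (Real.rpow_le_rpow_of_exponent_le h hα.1.le)
          · exact le_trans (min_le_right _ _) (Real.rpow_le_rpow_of_exponent_ge hr h hα.2.le)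
        have hm0 : 0 ≤ min (r ^ γ) (r ^ (1 - γ)) :=
          le_min (Real.rpow_pos_of_pos hr _).le (Real.rpow_pos_of_pos hr _).le
        exact mul_le_mul (mul_le_mul hsin hm hm0 (hsin0.trans hsin)) le_rfl hμα
          (mul_nonneg (hsin0.trans hsin) ((Real.rpow_pos_of_pos hr _).le))
    _ ≤ ∫ α in Ioo (0:ℝ) 1, Real.sin (π * α) * r ^ α * μ α := by
        apply setIntegral_mono_set hint1 ?_ hsub.eventuallyLE
        filter_upwards [ae_restrict_mem measurableSet_Ioo] with α hα
        simp only [Pi.zero_apply]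
        have h0 : 0 ≤ Real.sin (π * α) :=
          Real.sin_nonneg_of_nonneg_of_le_pi (by nlinarith [hα.1]) (by nlinarith [hα.2])
        exact mul_nonneg (mul_nonneg h0 (Real.rpow_pos_of_pos hr _).le) (hμ_nonneg α hα)

theorem stmt_6 (μ : ℝ → ℝ)
    (hμ_int : IntegrableOn μ (Ioo 0 1))
    (hμ_nonneg : ∀ α ∈ Ioo (0:ℝ) 1, 0 ≤ μ α)
    (hμ_ne : ¬ (∀ᵐ α ∂(volume.restrict (Ioo (0:ℝ) 1)), μ α = 0))
    (hcμ : 0 < ∫ α in Ioo (0:ℝ) 1, μ α)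
    (γ : ℝ) (hγ : γ ∈ Ioo (0:ℝ) (1/2))
    (hγμ : (∫ α in Ioo γ (1 - γ), μ α) = ((1 - γ) / 2) * ∫ α in Ioo (0:ℝ) 1, μ α)
    (S C g : ℝ → ℝ)
    (hS : ∀ r : ℝ, S r = ∫ α in Ioo (0:ℝ) 1, Real.sin (π * α) * r ^ α * μ α)
    (hC : ∀ r : ℝ, C r = ∫ α in Ioo (0:ℝ) 1, Real.cos (π * α) * r ^ α * μ α)
    (hg : ∀ t : ℝ, 0 < t →
      g t = (1/π) * ∫ r in Ioi (0:ℝ), Real.exp (-r * t) * S r / ((S r)^2 + (C r)^2)) :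
    (∀ t : ℝ, 0 < t →
      g t ≤ (4 * Real.Gamma γ * Real.sqrt π / (π^2 * ∫ α in Ioo (0:ℝ) 1, μ α)) *
        (Real.sqrt π * t ^ (γ - 1) + Real.Gamma γ * t ^ (-γ))) ∧
    (∃ c : ℝ, 0 < c ∧ ∀ t : ℝ, 0 < t → g t ≤ c * max (t ^ (γ - 1)) (t ^ (-γ))) := by
  obtain ⟨hγ0, hγ2⟩ := hγ
  have hπ := Real.pi_pos
  set cμ := ∫ α in Ioo (0:ℝ) 1, μ α with hcμ_def
  have hsin : 0 < Real.sin (π * γ) :=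
    Real.sin_pos_of_pos_of_lt_pi (by positivity) (by nlinarith)
  have hGγ : 0 < Real.Gamma γ := Real.Gamma_pos_of_pos hγ0
  have hG1 : 0 < Real.Gamma (1 - γ) := Real.Gamma_pos_of_pos (by linarith)
  have hG1le : Real.Gamma (1 - γ) ≤ Real.sqrt π := aux_gamma_le (by linarith) (by linarith)
  have hsqπ : 0 < Real.sqrt π := Real.sqrt_pos.mpr hπ
  have hrefl : Real.Gamma γ * Real.Gamma (1 - γ) = π / Real.sin (π * γ) :=
    Real.Gamma_mul_Gamma_one_sub γ
  have hsin_eq : Real.sin (π * γ) = π / (Real.Gamma γ * Real.Gamma (1 - γ)) := by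
    rw [hrefl]
    field_simp
  set B := Real.sin (π * γ) * ((1 - γ) / 2 * cμ) with hB_def
  have hBpos : 0 < B := by
    apply mul_pos hsin
    apply mul_pos (by linarith) hcμ
  have hSlb : ∀ r : ℝ, 0 < r → B * min (r ^ γ) (r ^ (1 - γ)) ≤ S r := by
    intro r hr
    have h := aux_S_lb μ hμ_int hμ_nonneg hγ0 hγ2 hr
    rw [hγμ] at h
    rw [hS r]
    calc B * min (r ^ γ) (r ^ (1 - γ))
        = Real.sin (π * γ) * min (r ^ γ) (r ^ (1 - γ)) * ((1 - γ) / 2 * cμ) := by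
          rw [hB_def]; ring
      _ ≤ _ := h
  have hSpos : ∀ r : ℝ, 0 < r → 0 < S r := fun r hr =>
    lt_of_lt_of_le (mul_pos hBpos (lt_min (Real.rpow_pos_of_pos hr _)
      (Real.rpow_pos_of_pos hr _))) (hSlb r hr)
  have main : ∀ t : ℝ, 0 < t →
      g t ≤ (4 * Real.Gamma γ * Real.sqrt π / (π^2 * cμ)) *
        (Real.sqrt π * t ^ (γ - 1) + Real.Gamma γ * t ^ (-γ)) := by
    intro t ht
    set K := B⁻¹ with hK_def
    have hK : 0 < K := inv_pos.mpr hBpos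
    have hpt : ∀ r ∈ Ioi (0:ℝ), Real.exp (-r * t) * S r / ((S r)^2 + (C r)^2)
        ≤ K * (r ^ (-γ) * Real.exp (-(t * r)) + r ^ (γ - 1) * Real.exp (-(t * r))) := by
      intro r hr
      rw [mem_Ioi] at hr
      have hSr := hSpos r hr
      have hmpos : 0 < min (r ^ γ) (r ^ (1 - γ)) :=
        lt_min (Real.rpow_pos_of_pos hr _) (Real.rpow_pos_of_pos hr _)
      have he : 0 < Real.exp (-r * t) := Real.exp_pos _
      have h1 : Real.exp (-r * t) * S r / ((S r)^2 + (C r)^2) ≤ Real.exp (-r * t) / S r := by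
        rw [div_le_div_iff₀ (by positivity) hSr]
        calc Real.exp (-r * t) * S r * S r = Real.exp (-r * t) * (S r)^2 := by ring
          _ ≤ Real.exp (-r * t) * ((S r)^2 + (C r)^2) := by nlinarith [sq_nonneg (C r)]
      have h2 : Real.exp (-r * t) / S r
          ≤ Real.exp (-r * t) * (K * (min (r ^ γ) (r ^ (1 - γ)))⁻¹) := by
        rw [div_eq_mul_inv]
        apply mul_le_mul_of_nonneg_left _ he.le
        rw [show K * (min (r ^ γ) (r ^ (1 - γ)))⁻¹
            = (B * min (r ^ γ) (r ^ (1 - γ)))⁻¹ by rw [hK_def, ← mul_inv]]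
        exact inv_anti₀ (mul_pos hBpos hmpos) (hSlb r hr)
      have h3 : (min (r ^ γ) (r ^ (1 - γ)))⁻¹ ≤ r ^ (-γ) + r ^ (γ - 1) := by
        rcases le_total (r ^ γ) (r ^ (1 - γ)) with h | h
        · rw [min_eq_left h, ← Real.rpow_neg hr.le]
          exact le_add_of_nonneg_right (Real.rpow_pos_of_pos hr _).le
        · rw [min_eq_right h, ← Real.rpow_neg hr.le, show -(1 - γ) = γ - 1 by ring]
          exact le_add_of_nonneg_left (Real.rpow_pos_of_pos hr _).le
      calc Real.exp (-r * t) * S r / ((S r)^2 + (C r)^2)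
          ≤ Real.exp (-r * t) * (K * (min (r ^ γ) (r ^ (1 - γ)))⁻¹) := h1.trans h2
        _ ≤ Real.exp (-r * t) * (K * (r ^ (-γ) + r ^ (γ - 1))) :=
            mul_le_mul_of_nonneg_left (mul_le_mul_of_nonneg_left h3 hK.le) he.le
        _ = K * (r ^ (-γ) * Real.exp (-(t * r)) + r ^ (γ - 1) * Real.exp (-(t * r))) := by
            rw [show -r * t = -(t * r) by ring]; ring
    have hi1 : IntegrableOn (fun r : ℝ => r ^ (-γ) * Real.exp (-(t * r))) (Ioi 0) := by
      have := integrableOn_rpow_mul_exp_neg_mul_rpow (show (-1:ℝ) < -γ by linarith) zero_lt_one ht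
      simpa [Real.rpow_one] using this
    have hi2 : IntegrableOn (fun r : ℝ => r ^ (γ - 1) * Real.exp (-(t * r))) (Ioi 0) := by
      have := integrableOn_rpow_mul_exp_neg_mul_rpow (show (-1:ℝ) < γ - 1 by linarith) zero_lt_one ht
      simpa [Real.rpow_one] using this
    have hiK : IntegrableOn (fun r : ℝ =>
        K * (r ^ (-γ) * Real.exp (-(t * r)) + r ^ (γ - 1) * Real.exp (-(t * r)))) (Ioi 0) :=
      (hi1.add hi2).const_mul K
    have hIle : (∫ r in Ioi (0:ℝ), Real.exp (-r * t) * S r / ((S r)^2 + (C r)^2))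
        ≤ ∫ r in Ioi (0:ℝ),
            K * (r ^ (-γ) * Real.exp (-(t * r)) + r ^ (γ - 1) * Real.exp (-(t * r))) := by
      apply integral_mono_of_nonneg ?_ hiK ?_
      · filter_upwards [ae_restrict_mem measurableSet_Ioi] with r hr
        simp only [Pi.zero_apply]
        rw [mem_Ioi] at hr
        exact div_nonneg (mul_nonneg (Real.exp_pos _).le (hSpos r hr).le) (by positivity)
      · filter_upwards [ae_restrict_mem measurableSet_Ioi] with r hr
        exact hpt r hr
    have e1 : (∫ r in Ioi (0:ℝ), r ^ (-γ) * Real.exp (-(t * r)))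
        = (1 / t) ^ (1 - γ) * Real.Gamma (1 - γ) := by
      rw [show (-γ) = (1 - γ) - 1 by ring]
      exact Real.integral_rpow_mul_exp_neg_mul_Ioi (by linarith) ht
    have e2 : (∫ r in Ioi (0:ℝ), r ^ (γ - 1) * Real.exp (-(t * r)))
        = (1 / t) ^ γ * Real.Gamma γ :=
      Real.integral_rpow_mul_exp_neg_mul_Ioi hγ0 ht
    have ht1 : (1 / t : ℝ) ^ (1 - γ) = t ^ (γ - 1) := by
      rw [one_div, Real.inv_rpow ht.le, ← Real.rpow_neg ht.le, show -(1 - γ) = γ - 1 by ring]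
    have ht2 : (1 / t : ℝ) ^ γ = t ^ (-γ) := by
      rw [one_div, Real.inv_rpow ht.le, ← Real.rpow_neg ht.le]
    have hIval : (∫ r in Ioi (0:ℝ),
        K * (r ^ (-γ) * Real.exp (-(t * r)) + r ^ (γ - 1) * Real.exp (-(t * r))))
        = K * (t ^ (γ - 1) * Real.Gamma (1 - γ) + t ^ (-γ) * Real.Gamma γ) := by
      rw [integral_const_mul, integral_add hi1 hi2, e1, e2, ht1, ht2]
    rw [hg t ht]
    have hgle : (1/π) * (∫ r in Ioi (0:ℝ), Real.exp (-r * t) * S r / ((S r)^2 + (C r)^2))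
        ≤ (1/π) * (K * (t ^ (γ - 1) * Real.Gamma (1 - γ) + t ^ (-γ) * Real.Gamma γ)) := by
      apply mul_le_mul_of_nonneg_left _ (by positivity)
      rw [← hIval]; exact hIle
    refine hgle.trans ?_
    have hT1 : 0 < t ^ (γ - 1) := Real.rpow_pos_of_pos ht _
    have hT2 : 0 < t ^ (-γ) := Real.rpow_pos_of_pos ht _
    have hne1γ : (1:ℝ) - γ ≠ 0 := by linarith
    have hBval : B = π * (1 - γ) * cμ / (2 * (Real.Gamma γ * Real.Gamma (1 - γ))) := by
      rw [hB_def, hsin_eq]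
      field_simp [hGγ.ne', hG1.ne']
    have hKval : K = 2 * Real.Gamma γ * Real.Gamma (1 - γ) / (π * (1 - γ) * cμ) := by
      rw [hK_def, hBval, inv_div]
      ring
    have hLHS : (1/π) * (K * (t ^ (γ - 1) * Real.Gamma (1 - γ) + t ^ (-γ) * Real.Gamma γ))
        = (Real.Gamma γ / (π^2 * cμ)) * ((2 * Real.Gamma (1 - γ) / (1 - γ)) *
            (Real.Gamma (1 - γ) * t ^ (γ - 1) + Real.Gamma γ * t ^ (-γ))) := by
      rw [hKval]
      field_simp [hπ.ne', hcμ.ne', hne1γ, hGγ.ne', hG1.ne']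
    rw [hLHS]
    have hX : (2 * Real.Gamma (1 - γ) / (1 - γ)) *
        (Real.Gamma (1 - γ) * t ^ (γ - 1) + Real.Gamma γ * t ^ (-γ))
        ≤ 4 * Real.sqrt π * (Real.sqrt π * t ^ (γ - 1) + Real.Gamma γ * t ^ (-γ)) := by
      have hfrac : 2 * Real.Gamma (1 - γ) / (1 - γ) ≤ 4 * Real.Gamma (1 - γ) := by
        rw [div_le_iff₀ (by linarith : (0:ℝ) < 1 - γ)]
        nlinarith
      have hsum0 : 0 ≤ Real.Gamma (1 - γ) * t ^ (γ - 1) + Real.Gamma γ * t ^ (-γ) :=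
        add_nonneg (mul_nonneg hG1.le hT1.le) (mul_nonneg hGγ.le hT2.le)
      calc (2 * Real.Gamma (1 - γ) / (1 - γ)) *
          (Real.Gamma (1 - γ) * t ^ (γ - 1) + Real.Gamma γ * t ^ (-γ))
          ≤ 4 * Real.Gamma (1 - γ) *
            (Real.Gamma (1 - γ) * t ^ (γ - 1) + Real.Gamma γ * t ^ (-γ)) :=
            mul_le_mul_of_nonneg_right hfrac hsum0
        _ ≤ 4 * Real.sqrt π * (Real.sqrt π * t ^ (γ - 1) + Real.Gamma γ * t ^ (-γ)) := by
            have h11 : Real.Gamma (1 - γ) * Real.Gamma (1 - γ) ≤ Real.sqrt π * Real.sqrt π :=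
              mul_le_mul hG1le hG1le hG1.le hsqπ.le
            nlinarith [mul_le_mul_of_nonneg_right h11 hT1.le,
              mul_le_mul_of_nonneg_right (mul_le_mul_of_nonneg_right hG1le hGγ.le) hT2.le]
    calc (Real.Gamma γ / (π^2 * cμ)) * ((2 * Real.Gamma (1 - γ) / (1 - γ)) *
          (Real.Gamma (1 - γ) * t ^ (γ - 1) + Real.Gamma γ * t ^ (-γ)))
        ≤ (Real.Gamma γ / (π^2 * cμ)) *
          (4 * Real.sqrt π * (Real.sqrt π * t ^ (γ - 1) + Real.Gamma γ * t ^ (-γ))) := by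
          apply mul_le_mul_of_nonneg_left hX
          exact le_of_lt (div_pos hGγ (mul_pos (by positivity) hcμ))
      _ = (4 * Real.Gamma γ * Real.sqrt π / (π^2 * cμ)) *
          (Real.sqrt π * t ^ (γ - 1) + Real.Gamma γ * t ^ (-γ)) := by ring
  refine ⟨main, ⟨(4 * Real.Gamma γ * Real.sqrt π / (π^2 * cμ)) * (Real.sqrt π + Real.Gamma γ),
    ?_, fun t ht => ?_⟩⟩
  · apply mul_pos
    · exact div_pos (mul_pos (mul_pos (by norm_num) hGγ) hsqπ) (mul_pos (by positivity) hcμ)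
    · positivity
  · have hT1 : 0 < t ^ (γ - 1) := Real.rpow_pos_of_pos ht _
    have hT2 : 0 < t ^ (-γ) := Real.rpow_pos_of_pos ht _
    have hA : (0:ℝ) ≤ 4 * Real.Gamma γ * Real.sqrt π / (π^2 * cμ) :=
      le_of_lt (div_pos (mul_pos (mul_pos (by norm_num) hGγ) hsqπ) (mul_pos (by positivity) hcμ))
    have hinner : Real.sqrt π * t ^ (γ - 1) + Real.Gamma γ * t ^ (-γ)
        ≤ (Real.sqrt π + Real.Gamma γ) * max (t ^ (γ - 1)) (t ^ (-γ)) := by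
      have hM1 : t ^ (γ - 1) ≤ max (t ^ (γ - 1)) (t ^ (-γ)) := le_max_left _ _
      have hM2 : t ^ (-γ) ≤ max (t ^ (γ - 1)) (t ^ (-γ)) := le_max_right _ _
      nlinarith [mul_le_mul_of_nonneg_left hM1 hsqπ.le, mul_le_mul_of_nonneg_left hM2 hGγ.le]
    calc g t ≤ (4 * Real.Gamma γ * Real.sqrt π / (π^2 * cμ)) *
        (Real.sqrt π * t ^ (γ - 1) + Real.Gamma γ * t ^ (-γ)) := main t ht
      _ ≤ (4 * Real.Gamma γ * Real.sqrt π / (π^2 * cμ)) *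
          ((Real.sqrt π + Real.Gamma γ) * max (t ^ (γ - 1)) (t ^ (-γ))) :=
          mul_le_mul_of_nonneg_left hinner hA
      _ = (4 * Real.Gamma γ * Real.sqrt π / (π^2 * cμ)) * (Real.sqrt π + Real.Gamma γ) *
          max (t ^ (γ - 1)) (t ^ (-γ)) := by ring
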